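/- For n ≥ 2, the minimum cardinality N(n) of a simply 3-suitable set of permutations of [n] satisfies N(n) ≤ ⌈log₂ log₂ n⌉ + 1; in particular there exists a simply 3-suitable set of permutations of [n] of size ⌈log₂ log₂ n⌉ + 1. -/

import Mathlib

/-- `β(s,t,σ)`: the set of `x` with `σ⁻¹(x)` strictly between `σ⁻¹(s)` and `σ⁻¹(t)`. -/
def beta {n : ℕ} (σ : Equiv.Perm (Fin n)) (s t : Fin n) : Set (Fin n) :=
  {x | (σ.symm s < σ.symm x ∧ σ.symm x < σ.symm t) ∨
       (σ.symm t < σ.symm x ∧ σ.symm x < σ.symm s)}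

/-- A set of permutations of `[n]` is simply 3-suitable if for every pair `s, t`,
the intersection over `σ ∈ S` of `β(s,t,σ)` is empty. -/
def SimplySuitable {n : ℕ} (S : Set (Equiv.Perm (Fin n))) : Prop :=
  ∀ s t : Fin n, ⋂ σ ∈ S, beta σ s t = ∅

/-- `N(n)`: the minimum cardinality of a simply 3-suitable set of permutations of `[n]`. -/
noncomputable def Nsimply (n : ℕ) : ℕ :=
  sInf {k | ∃ S : Finset (Equiv.Perm (Fin n)), S.card = k ∧ SimplySuitable (↑S : Set (Equiv.Perm (Fin n)))}

namespace NSaux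

/-- Betweenness with respect to a key function. -/
def Btw {β : Type*} (f : β → ℕ) (s t x : β) : Prop :=
  (f s < f x ∧ f x < f t) ∨ (f t < f x ∧ f x < f s)

/-- A family of key functions is good if for each triple some key avoids betweenness. -/
def Good {β : Type*} {m : ℕ} (F : Fin m → β → ℕ) : Prop :=
  ∀ s t x : β, ∃ i, ¬ Btw (F i) s t x

lemma keylt {q X Y U V : ℕ} (hU : U < q) (hXY : X < Y) : X * q + U < Y * q + V := by
  calc X * q + U < X * q + q := Nat.add_lt_add_left hU _
    _ = (X + 1) * q := by ring
    _ ≤ Y * q := Nat.mul_le_mul_right q hXY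
    _ ≤ Y * q + V := Nat.le_add_right _ _

lemma lexlt {q A A' B B' : ℕ} (hB : B < q) (hB' : B' < q) :
    A * q + B < A' * q + B' ↔ (A < A' ∨ (A = A' ∧ B < B')) := by
  constructor
  · intro h
    rcases lt_trichotomy A A' with h1 | h1 | h1
    · exact Or.inl h1
    · subst h1
      exact Or.inr ⟨rfl, by exact Nat.lt_of_add_lt_add_left h⟩
    · have h2 : A' * q + B' < A * q + B := keylt hB' h1
      omega
  · rintro (h1 | ⟨rfl, h2⟩)
    · exact keylt hB h1
    · exact Nat.add_lt_add_left h2 _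

lemma pairinj {q A A' B B' : ℕ} (hB : B < q) (hB' : B' < q)
    (h : A * q + B = A' * q + B') : A = A' ∧ B = B' := by
  have hA : A = A' := by
    rcases lt_trichotomy A A' with h1 | h1 | h1
    · have h2 : A * q + B < A' * q + B' := keylt hB h1
      omega
    · exact h1
    · have h2 : A' * q + B' < A * q + B := keylt hB' h1
      omega
  subst hA
  exact ⟨rfl, by omega⟩

def hiF (q : ℕ) (hq : 0 < q) (x : Fin (q * q)) : Fin q :=
  ⟨x.val / q, (Nat.div_lt_iff_lt_mul hq).mpr x.isLt⟩

def loF (q : ℕ) (hq : 0 < q) (x : Fin (q * q)) : Fin q :=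
  ⟨x.val % q, Nat.mod_lt _ hq⟩

lemma hi_lo_inj {q : ℕ} (hq : 0 < q) {x y : Fin (q * q)}
    (h1 : hiF q hq x = hiF q hq y) (h2 : loF q hq x = loF q hq y) : x = y := by
  have e1 : x.val / q = y.val / q := congrArg Fin.val h1
  have e2 : x.val % q = y.val % q := congrArg Fin.val h2
  apply Fin.ext
  rw [← Nat.div_add_mod x.val q, ← Nat.div_add_mod y.val q, e1, e2]

lemma step (q : ℕ) (hq : 0 < q) (m : ℕ) (F : Fin (m + 1) → Fin q → ℕ)
    (hbd : ∀ i x, F i x < q) (hinj : ∀ i, Function.Injective (F i))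
    (hgood : Good F) :
    ∃ G : Fin (m + 2) → Fin (q * q) → ℕ,
      (∀ i x, G i x < q * q) ∧ (∀ i, Function.Injective (G i)) ∧ Good G := by
  refine ⟨Fin.cases (fun x => F 0 ((hiF q hq) x) * q + (q - 1 - F 0 ((loF q hq) x)))
      (fun i x => F i ((hiF q hq) x) * q + F i ((loF q hq) x)), ?_, ?_, ?_⟩
  · intro i x
    induction i using Fin.cases with
    | zero =>
      simp only [Fin.cases_zero]
      have h1 := hbd 0 ((hiF q hq) x)
      calc F 0 ((hiF q hq) x) * q + (q - 1 - F 0 ((loF q hq) x)) < F 0 ((hiF q hq) x) * q + q := by omega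
        _ = (F 0 ((hiF q hq) x) + 1) * q := by ring
        _ ≤ q * q := Nat.mul_le_mul_right q (by omega)
    | succ i =>
      simp only [Fin.cases_succ]
      have h1 := hbd i ((hiF q hq) x)
      have h2 := hbd i ((loF q hq) x)
      calc F i ((hiF q hq) x) * q + F i ((loF q hq) x) < F i ((hiF q hq) x) * q + q := by omega
        _ = (F i ((hiF q hq) x) + 1) * q := by ring
        _ ≤ q * q := Nat.mul_le_mul_right q (by omega)
  · intro i
    induction i using Fin.cases with
    | zero =>
      intro x y hxy
      simp only [Fin.cases_zero] at hxy
      have b1 := hbd 0 ((loF q hq) x)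
      have b2 := hbd 0 ((loF q hq) y)
      obtain ⟨e1, e2⟩ := pairinj (by omega) (by omega) hxy
      have e3 : F 0 ((loF q hq) x) = F 0 ((loF q hq) y) := by omega
      exact hi_lo_inj hq (hinj 0 e1) (hinj 0 e3)
    | succ i =>
      intro x y hxy
      simp only [Fin.cases_succ] at hxy
      obtain ⟨e1, e2⟩ := pairinj (hbd i ((loF q hq) x)) (hbd i ((loF q hq) y)) hxy
      exact hi_lo_inj hq (hinj i e1) (hinj i e2)
  · intro s t x
    by_contra hc
    push_neg at hc
    have hrev := hc 0
    simp only [Fin.cases_zero] at hrev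
    have hplain : ∀ i : Fin (m + 1),
        Btw (fun y => F i ((hiF q hq) y) * q + F i ((loF q hq) y)) s t x := by
      intro i
      have h := hc i.succ
      simpa only [Fin.cases_succ] using h
    have hbs := hbd 0 ((loF q hq) s); have hbt := hbd 0 ((loF q hq) t); have hbx := hbd 0 ((loF q hq) x)
    simp only [Btw] at hrev
    rw [lexlt (by omega) (by omega), lexlt (by omega) (by omega),
        lexlt (by omega) (by omega), lexlt (by omega) (by omega)] at hrev
    rcases eq_or_ne ((hiF q hq) s) ((hiF q hq) t) with h12 | h12
    · obtain ⟨i, hni⟩ := hgood ((loF q hq) s) ((loF q hq) t) ((loF q hq) x)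
      apply hni
      have hp := hplain i
      simp only [Btw] at hp ⊢
      rw [lexlt (hbd i ((loF q hq) s)) (hbd i ((loF q hq) x)), lexlt (hbd i ((loF q hq) x)) (hbd i ((loF q hq) t)),
          lexlt (hbd i ((loF q hq) t)) (hbd i ((loF q hq) x)), lexlt (hbd i ((loF q hq) x)) (hbd i ((loF q hq) s))] at hp
      have e : F i ((hiF q hq) s) = F i ((hiF q hq) t) := by rw [h12]
      omega
    · rcases eq_or_ne ((hiF q hq) x) ((hiF q hq) s) with hxs | hxs
      · have hp := hplain 0
        simp only [Btw] at hp
        rw [lexlt (hbd 0 ((loF q hq) s)) (hbd 0 ((loF q hq) x)), lexlt (hbd 0 ((loF q hq) x)) (hbd 0 ((loF q hq) t)),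
            lexlt (hbd 0 ((loF q hq) t)) (hbd 0 ((loF q hq) x)), lexlt (hbd 0 ((loF q hq) x)) (hbd 0 ((loF q hq) s))] at hp
        have e1 : F 0 ((hiF q hq) x) = F 0 ((hiF q hq) s) := by rw [hxs]
        have e2 : F 0 ((hiF q hq) x) ≠ F 0 ((hiF q hq) t) := fun e => h12 (hxs ▸ hinj 0 e)
        omega
      · rcases eq_or_ne ((hiF q hq) x) ((hiF q hq) t) with hxt | hxt
        · have hp := hplain 0
          simp only [Btw] at hp
          rw [lexlt (hbd 0 ((loF q hq) s)) (hbd 0 ((loF q hq) x)), lexlt (hbd 0 ((loF q hq) x)) (hbd 0 ((loF q hq) t)),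
              lexlt (hbd 0 ((loF q hq) t)) (hbd 0 ((loF q hq) x)), lexlt (hbd 0 ((loF q hq) x)) (hbd 0 ((loF q hq) s))] at hp
          have e1 : F 0 ((hiF q hq) x) = F 0 ((hiF q hq) t) := by rw [hxt]
          have e2 : F 0 ((hiF q hq) x) ≠ F 0 ((hiF q hq) s) := fun e => hxs (hinj 0 e)
          omega
        · obtain ⟨i, hni⟩ := hgood ((hiF q hq) s) ((hiF q hq) t) ((hiF q hq) x)
          apply hni
          have hp := hplain i
          simp only [Btw] at hp ⊢
          rw [lexlt (hbd i ((loF q hq) s)) (hbd i ((loF q hq) x)), lexlt (hbd i ((loF q hq) x)) (hbd i ((loF q hq) t)),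
              lexlt (hbd i ((loF q hq) t)) (hbd i ((loF q hq) x)), lexlt (hbd i ((loF q hq) x)) (hbd i ((loF q hq) s))] at hp
          have e1 : F i ((hiF q hq) x) ≠ F i ((hiF q hq) s) := fun e => hxs (hinj i e)
          have e2 : F i ((hiF q hq) x) ≠ F i ((hiF q hq) t) := fun e => hxt (hinj i e)
          omega

lemma main (k : ℕ) : ∃ F : Fin (k + 1) → Fin (2 ^ 2 ^ k) → ℕ,
    (∀ i x, F i x < 2 ^ 2 ^ k) ∧ (∀ i, Function.Injective (F i)) ∧ Good F := by
  induction k with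
  | zero =>
    refine ⟨fun _ x => x.val, fun i x => x.isLt, fun i => Fin.val_injective, ?_⟩
    intro s t x
    refine ⟨0, ?_⟩
    have hs : s.val < 2 := s.isLt
    have ht : t.val < 2 := t.isLt
    have hx : x.val < 2 := x.isLt
    simp only [Btw]
    omega
  | succ k ih =>
    obtain ⟨F, hbd, hinj, hgood⟩ := ih
    have heq : (2 : ℕ) ^ 2 ^ (k + 1) = 2 ^ 2 ^ k * 2 ^ 2 ^ k := by
      rw [← pow_add]
      congr 1
      rw [pow_succ]
      ring
    rw [heq]
    exact step _ (Nat.pow_pos (by norm_num)) k F hbd hinj hgood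

lemma restrict {N n m : ℕ} (h : n ≤ N) (F : Fin m → Fin N → ℕ)
    (hinj : ∀ i, Function.Injective (F i)) (hgood : Good F) :
    ∃ F' : Fin m → Fin n → ℕ, (∀ i, Function.Injective (F' i)) ∧ Good F' := by
  refine ⟨fun i y => F i (Fin.castLE h y), ?_, ?_⟩
  · intro i x y hxy
    exact Fin.castLE_injective h (hinj i hxy)
  · intro s t x
    obtain ⟨i, hi⟩ := hgood (Fin.castLE h s) (Fin.castLE h t) (Fin.castLE h x)
    exact ⟨i, hi⟩

lemma exists_perm {n : ℕ} (f : Fin n → ℕ) (hf : Function.Injective f) :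
    ∃ σ : Equiv.Perm (Fin n), ∀ x y, σ.symm x < σ.symm y ↔ f x < f y := by
  classical
  set s : Finset ℕ := Finset.image f Finset.univ with hs
  have hcard : s.card = n := by
    rw [hs, Finset.card_image_of_injective _ hf, Finset.card_univ, Fintype.card_fin]
  set e := s.orderIsoOfFin hcard with he
  have hmem : ∀ x, f x ∈ s := fun x => Finset.mem_image_of_mem f (Finset.mem_univ x)
  set g : Fin n → Fin n := fun x => e.symm ⟨f x, hmem x⟩ with hg
  have hginj : Function.Injective g := by
    intro x y hxy
    have h2 := e.symm.injective hxy
    exact hf (congrArg Subtype.val h2)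
  have hgb : Function.Bijective g := Finite.injective_iff_bijective.mp hginj
  refine ⟨(Equiv.ofBijective g hgb).symm, ?_⟩
  intro x y
  show g x < g y ↔ f x < f y
  rw [← e.lt_iff_lt]
  simp only [hg, OrderIso.apply_symm_apply]
  exact Subtype.mk_lt_mk

lemma beta_iff {n : ℕ} (σ : Equiv.Perm (Fin n)) (f : Fin n → ℕ)
    (h : ∀ x y, σ.symm x < σ.symm y ↔ f x < f y) (s t x : Fin n) :
    x ∈ beta σ s t ↔ Btw f s t x := by
  simp only [beta, Set.mem_setOf_eq, Btw, h]

lemma suit_mono {n : ℕ} {S T : Finset (Equiv.Perm (Fin n))} (h : S ⊆ T)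
    (hS : SimplySuitable (↑S : Set (Equiv.Perm (Fin n)))) :
    SimplySuitable (↑T : Set (Equiv.Perm (Fin n))) := by
  intro s t
  rw [Set.eq_empty_iff_forall_notMem]
  intro x hx
  rw [Set.mem_iInter₂] at hx
  have h2 : x ∈ ⋂ σ ∈ (↑S : Set (Equiv.Perm (Fin n))), beta σ s t :=
    Set.mem_iInter₂.mpr fun σ hσ => hx σ (h hσ)
  rw [hS s t] at h2
  exact h2

end NSaux

/-- For `n ≥ 2`, `N(n) ≤ ⌈log₂ log₂ n⌉ + 1`; in particular there is a simply 3-suitable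
set of permutations of `[n]` of exactly this size. -/
theorem Nsimply_upper_bound (n : ℕ) (hn : 2 ≤ n) :
    Nsimply n ≤ Nat.clog 2 (Nat.clog 2 n) + 1 ∧
      ∃ S : Finset (Equiv.Perm (Fin n)), S.card = Nat.clog 2 (Nat.clog 2 n) + 1 ∧
        SimplySuitable (↑S : Set (Equiv.Perm (Fin n))) := by
  classical
  set k := Nat.clog 2 (Nat.clog 2 n) with hk
  have hq : n ≤ 2 ^ 2 ^ k := by
    calc n ≤ 2 ^ Nat.clog 2 n := Nat.le_pow_clog (by norm_num) n
      _ ≤ 2 ^ 2 ^ k := Nat.pow_le_pow_right (by norm_num) (Nat.le_pow_clog (by norm_num) _)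
  obtain ⟨F, hbd, hinj, hgood⟩ := NSaux.main k
  obtain ⟨F', hinj', hgood'⟩ := NSaux.restrict hq F hinj hgood
  choose σ hσ using fun i => NSaux.exists_perm (F' i) (hinj' i)
  set S0 : Finset (Equiv.Perm (Fin n)) := Finset.image σ Finset.univ with hS0
  have hS0suit : SimplySuitable (↑S0 : Set (Equiv.Perm (Fin n))) := by
    intro s t
    rw [Set.eq_empty_iff_forall_notMem]
    intro x hx
    rw [Set.mem_iInter₂] at hx
    obtain ⟨i, hni⟩ := hgood' s t x
    refine hni ((NSaux.beta_iff (σ i) (F' i) (hσ i) s t x).mp ?_)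
    exact hx (σ i) (by simp [hS0])
  have hcard0 : S0.card ≤ k + 1 := by
    calc S0.card ≤ Finset.univ.card := Finset.card_image_le.trans (le_refl _)
      _ = k + 1 := by simp
  have hkn : k + 1 ≤ n := by
    have h1 : Nat.clog 2 n ≤ n - 1 := by
      have h2 : n ≤ 2 ^ (n - 1) := by
        have := Nat.lt_two_pow_self (n := n - 1)
        omega
      calc Nat.clog 2 n ≤ Nat.clog 2 (2 ^ (n - 1)) := Nat.clog_mono_right 2 h2
        _ = n - 1 := Nat.clog_pow 2 (n - 1) (by norm_num)
    have h3 : k ≤ Nat.clog 2 n := by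
      rw [hk]
      calc Nat.clog 2 (Nat.clog 2 n) ≤ Nat.clog 2 (2 ^ Nat.clog 2 n) :=
          Nat.clog_mono_right 2 (Nat.lt_two_pow_self (n := Nat.clog 2 n)).le
        _ = Nat.clog 2 n := Nat.clog_pow 2 _ (by norm_num)
    omega
  have hbig : k + 1 ≤ Fintype.card (Equiv.Perm (Fin n)) := by
    rw [Fintype.card_perm, Fintype.card_fin]
    exact hkn.trans (Nat.self_le_factorial n)
  obtain ⟨S, hsub, hScard⟩ := Finset.exists_superset_card_eq hcard0 hbig
  have hSsuit := NSaux.suit_mono hsub hS0suit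
  exact ⟨Nat.sInf_le ⟨S, hScard, hSsuit⟩, S, hScard, hSsuit⟩
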